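/- (Attack construction / tightness of individual certification for rNN) Let X be a metric space, c ≥ 2, r ≥ 0, D a multiset over X × Fin c, and x : X. Let a := rNN_r(D,x), s_l := s_l(N_r(D,x)), and let b be the largest label among those l ≠ a attaining the maximum of s_l over l ≠ a. Then for every natural number e with e ≥ s_a − s_b + 𝟙(b < a), the poisoned dataset D* obtained from D by adding e copies of the example (x, b) satisfies S(D,D*) = e and rNN_r(D*,x) ≠ a. -/

import Mathlib

/-- Poisoning size between two multisets: `max (card A) (card B) - card (A ∩ B)`. -/
noncomputable def pSize {α : Type*} (A B : Multiset α) : ℕ :=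
  haveI := Classical.decEq α
  max A.card B.card - (A ∩ B).card

/-- Number of votes for label `l` in a multiset of labeled examples (counted with
multiplicity). -/
def votes {X : Type*} {c : ℕ} (T : Multiset (X × Fin c)) (l : Fin c) : ℕ :=
  T.countP (fun p => p.2 = l)

/-- Tie-broken majority label: the largest label (in the order of `Fin c`) among the
labels attaining the maximum vote count. -/
noncomputable def majLabel {X : Type*} {c : ℕ} (hc : 0 < c) (T : Multiset (X × Fin c)) :
    Fin c :=
  (Finset.univ.filter (fun l : Fin c => ∀ l', votes T l' ≤ votes T l)).max'
    (by
      haveI : NeZero c := ⟨hc.ne'⟩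
      obtain ⟨b, -, hb⟩ := Finset.exists_max_image (Finset.univ : Finset (Fin c)) (votes T)
        Finset.univ_nonempty
      exact ⟨b, Finset.mem_filter.mpr ⟨Finset.mem_univ b, fun l' => hb l' (Finset.mem_univ l')⟩⟩)

/-- The largest label, among those `l ≠ a`, attaining the maximum of `s l` over `l ≠ a`. -/
noncomputable def secondLabel {c : ℕ} (hc : 2 ≤ c) (s : Fin c → ℕ) (a : Fin c) : Fin c :=
  (Finset.univ.filter (fun l : Fin c => l ≠ a ∧ ∀ l', l' ≠ a → s l' ≤ s l)).max'
    (by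
      have h1 : 1 < Fintype.card (Fin c) := by rw [Fintype.card_fin]; omega
      obtain ⟨l0, hl0⟩ := Fintype.exists_ne_of_one_lt_card h1 a
      have hne : (Finset.univ.filter (fun l : Fin c => l ≠ a)).Nonempty :=
        ⟨l0, Finset.mem_filter.mpr ⟨Finset.mem_univ _, hl0⟩⟩
      obtain ⟨b, hb, hbmax⟩ := Finset.exists_max_image _ s hne
      refine ⟨b, Finset.mem_filter.mpr ⟨Finset.mem_univ _, (Finset.mem_filter.mp hb).2, ?_⟩⟩
      intro l' hl'
      exact hbmax l' (Finset.mem_filter.mpr ⟨Finset.mem_univ _, hl'⟩))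

/-- rNN neighbor multiset: training examples within distance `r` of the test input `x`. -/
noncomputable def Nr {X : Type*} [MetricSpace X] {c : ℕ} (r : ℝ)
    (D : Multiset (X × Fin c)) (x : X) : Multiset (X × Fin c) :=
  haveI : DecidablePred (fun p : X × Fin c => dist p.1 x ≤ r) := Classical.decPred _
  D.filter (fun p => dist p.1 x ≤ r)

/-- rNN prediction: tie-broken majority label among the rNN neighbors. -/
noncomputable def rNNpred {X : Type*} [MetricSpace X] {c : ℕ} (hc : 0 < c) (r : ℝ)
    (D : Multiset (X × Fin c)) (x : X) : Fin c :=
  majLabel hc (Nr r D x)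

private lemma countP_replicate' {α : Type*} (p : α → Prop) [DecidablePred p] (e : ℕ) (a : α) :
    Multiset.countP p (Multiset.replicate e a) = if p a then e else 0 := by
  induction e with
  | zero => simp
  | succ n ih => rw [Multiset.replicate_succ, Multiset.countP_cons, ih]; split <;> simp

private lemma inter_add_self {α : Type*} [DecidableEq α] (D t : Multiset α) :
    D ∩ (D + t) = D :=
  le_antisymm (Multiset.inter_le_left)
    (Multiset.le_inter le_rfl (Multiset.le_add_right _ _))

/-- attack construction / tightness of individual certification for rNN:
if `e ≥ s_a − s_b + 𝟙(b < a)`, then adding `e` copies of the example `(x, b)` to `D`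
yields a poisoned dataset of poisoning size exactly `e` on which rNN no longer predicts
`a` for `x`. -/
theorem rnn_attack_construction {X : Type*} [MetricSpace X] {c : ℕ} (hc : 2 ≤ c)
    {r : ℝ} (hr : 0 ≤ r) (D : Multiset (X × Fin c)) (x : X) (a b : Fin c)
    (ha : a = rNNpred (by omega) r D x)
    (hb : b = secondLabel hc (fun l => votes (Nr r D x) l) a)
    (e : ℕ)
    (he : (votes (Nr r D x) a : ℤ) - (votes (Nr r D x) b : ℤ) +
      (if b < a then 1 else 0) ≤ (e : ℤ))
    (Dstar : Multiset (X × Fin c)) (hDstar : Dstar = D + Multiset.replicate e (x, b)) :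
    pSize D Dstar = e ∧ rNNpred (by omega : 0 < c) r Dstar x ≠ a := by
  subst hDstar
  set T := Nr r D x with hT
  have hrep : (Multiset.replicate e (x, b)).filter
      (fun p : X × Fin c => dist p.1 x ≤ r) = Multiset.replicate e (x, b) := by
    apply Multiset.filter_eq_self.mpr
    intro p hp
    rw [Multiset.eq_of_mem_replicate hp]
    simpa using hr
  have hNr : Nr r (D + Multiset.replicate e (x, b)) x = T + Multiset.replicate e (x, b) := by
    simp only [Nr, Multiset.filter_add, hT]
    congr 1
  have hvotes : ∀ l, votes (Nr r (D + Multiset.replicate e (x, b)) x) l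
      = votes T l + (if l = b then e else 0) := by
    intro l
    rw [hNr]
    simp only [votes, Multiset.countP_add]
    congr 1
    rw [countP_replicate' _ e (x, b)]
    by_cases h : b = l <;> simp [h, eq_comm]
  have hamem : a ∈ Finset.univ.filter (fun l : Fin c => ∀ l', votes T l' ≤ votes T l) := by
    rw [ha]
    unfold rNNpred majLabel
    apply Finset.max'_mem
  have hamax : ∀ l, votes T l ≤ votes T a := (Finset.mem_filter.mp hamem).2
  have hbmem : b ∈ Finset.univ.filter
      (fun l : Fin c => l ≠ a ∧ ∀ l', l' ≠ a → votes T l' ≤ votes T l) := by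
    rw [hb]
    unfold secondLabel
    apply Finset.max'_mem
  have hbne : b ≠ a := (Finset.mem_filter.mp hbmem).2.1
  constructor
  · simp only [pSize, Multiset.card_add, Multiset.card_replicate,
      @inter_add_self _ (Classical.decEq _) D (Multiset.replicate e (x, b))]
    omega
  · intro hpred
    have hs'b : votes (Nr r (D + Multiset.replicate e (x, b)) x) b = votes T b + e := by
      rw [hvotes b]; simp
    have hs'a : votes (Nr r (D + Multiset.replicate e (x, b)) x) a = votes T a := by
      rw [hvotes a]; simp [hbne.symm]
    rcases lt_trichotomy b a with hba | hba | hba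
    · have he' : votes T a + 1 ≤ votes T b + e := by
        rw [if_pos hba] at he
        omega
      have hmeq : rNNpred (by omega : 0 < c) r (D + Multiset.replicate e (x, b)) x ∈
          Finset.univ.filter (fun l : Fin c =>
          ∀ l', votes (Nr r (D + Multiset.replicate e (x, b)) x) l' ≤
            votes (Nr r (D + Multiset.replicate e (x, b)) x) l) := by
        unfold rNNpred majLabel
        apply Finset.max'_mem
      rw [hpred] at hmeq
      have h2 := (Finset.mem_filter.mp hmeq).2 b
      rw [hs'b, hs'a] at h2
      omega
    · exact hbne hba
    · have he' : votes T a ≤ votes T b + e := by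
        rw [if_neg (by omega : ¬ b < a)] at he
        omega
      have hbmax' : ∀ l', votes (Nr r (D + Multiset.replicate e (x, b)) x) l' ≤
          votes (Nr r (D + Multiset.replicate e (x, b)) x) b := by
        intro l'
        by_cases h : l' = b
        · subst h; exact le_refl _
        · rw [hvotes l', hs'b]
          simp only [if_neg h, add_zero]
          exact le_trans (hamax l') he'
      have hble : b ≤ rNNpred (by omega : 0 < c) r (D + Multiset.replicate e (x, b)) x := by
        unfold rNNpred majLabel
        exact Finset.le_max' _ b (Finset.mem_filter.mpr ⟨Finset.mem_univ _, hbmax'⟩)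
      rw [hpred] at hble
      exact absurd hble (not_le.mpr hba)
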